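/- Let w(a) = c > 3 for all a ∈ A and w(b) = 1 for all b ∈ B, and let H be the graph containing for each a ∈ A the edges {a, f(a)} and {a, s(a)} (where f(a) is a's first-choice neighbor and s(a) is a's best-ranked neighbor among vertices of B that are not the first choice of any vertex in A). Then for every cycle C of H, every popular matching matches all vertices of C along edges of C. -/

import Mathlib

structure PMInstance (V : Type) [Fintype V] [DecidableEq V] where
  A : Finset V
  E : V → V → Prop
  Esymm : ∀ u v : V, E u v → E v u
  loopless : ∀ v : V, ¬ E v v
  bipartite : ∀ u v : V, E u v → (u ∈ A ↔ v ∉ A)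
  pref : V → V → V → Prop
  pref_irrefl : ∀ v u : V, ¬ pref v u u
  pref_trans : ∀ v u z t : V, pref v u z → pref v z t → pref v u t
  pref_asymm : ∀ v u z : V, pref v u z → ¬ pref v z u
  pref_total : ∀ v u z : V, E v u → E v z → u ≠ z → pref v u z ∨ pref v z u
  w : V → ℚ
  w_nonneg : ∀ v : V, 0 ≤ w v

structure Matching (V : Type) [Fintype V] [DecidableEq V] (E : V → V → Prop) where
  m : V → Option V
  msymm : ∀ u v : V, m u = some v ↔ m v = some u
  valid : ∀ u v : V, m u = some v → E u v

attribute [local instance] Classical.propDecidable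

variable {V : Type} [Fintype V] [DecidableEq V]

/-- Vertex `v` prefers matching `M` to matching `M'`. -/
def prefersVx (I : PMInstance V) (M M' : Matching V I.E) (v : V) : Prop :=
  (M'.m v = none ∧ M.m v ≠ none) ∨
    (∃ u u' : V, M.m v = some u ∧ M'.m v = some u' ∧ I.pref v u u')

/-- Total weight of the vertices preferring `M` to `M'`. -/
noncomputable def weightPref (I : PMInstance V) (M M' : Matching V I.E) : ℚ :=
  ∑ v : V, if prefersVx I M M' v then I.w v else 0

/-- A matching is popular if it never loses a weighted head-to-head comparison. -/
def popular (I : PMInstance V) (M : Matching V I.E) : Prop :=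
  ∀ M' : Matching V I.E, weightPref I M' M ≤ weightPref I M M'

/-- `b` is the first choice (`f`-post) of `a`. -/
def firstChoice (I : PMInstance V) (a b : V) : Prop :=
  I.E a b ∧ ∀ z : V, I.E a z → z ≠ b → I.pref a b z

/-- `b` is the `s`-post of `a`: best-ranked neighbor among vertices that are
no vertex's first choice. -/
def sPost (I : PMInstance V) (a b : V) : Prop :=
  I.E a b ∧ (¬ ∃ a' : V, firstChoice I a' b) ∧
    ∀ z : V, I.E a z → z ≠ b → (¬ ∃ a' : V, firstChoice I a' z) → I.pref a b z

/-- The symmetrized relation of `f`- and `s`-edges. -/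
def fsRel (I : PMInstance V) (u v : V) : Prop :=
  (u ∈ I.A ∧ (firstChoice I u v ∨ sPost I u v)) ∨
    (v ∈ I.A ∧ (firstChoice I v u ∨ sPost I v u))

/-- The graph with the edges `{a, f(a)}` and `{a, s(a)}` for all `a ∈ A`. -/
def fsGraph (I : PMInstance V) : SimpleGraph V where
  Adj u v := u ≠ v ∧ fsRel I u v
  symm := by
    constructor
    intro u v h
    exact ⟨h.1.symm, h.2.symm⟩
  loopless := ⟨fun v h => h.1 rfl⟩


section Promote

variable {E : V → V → Prop}

/-- The matching obtained from `M` by forcing the pair `(a, t)` and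
removing all pairs touching `a` or `t`. -/
def promoFun (M : Matching V E) (a t : V) : V → Option V := fun v =>
  if v = a then some t else if v = t then some a
  else (M.m v).bind fun u => if u = a ∨ u = t then none else some u

lemma promoFun_symm (M : Matching V E) (a t : V) (hat : a ≠ t) :
    ∀ u v, promoFun M a t u = some v → promoFun M a t v = some u := by
  intro u v h
  unfold promoFun at h ⊢
  by_cases hu : u = a
  · subst hu
    rw [if_pos rfl] at h
    obtain rfl : t = v := by injection h
    simp [hat.symm, hat]
  · by_cases hu' : u = t
    · subst hu'
      rw [if_neg (Ne.symm hat), if_pos rfl] at h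
      obtain rfl : a = v := by injection h
      simp
    · rw [if_neg hu, if_neg hu'] at h
      rcases hMu : M.m u with _ | z
      · rw [hMu] at h; simp at h
      · rw [hMu] at h
        simp only [Option.bind_some] at h
        by_cases hz : z = a ∨ z = t
        · rw [if_pos hz] at h; simp at h
        · rw [if_neg hz] at h
          obtain rfl : z = v := by injection h
          push_neg at hz
          rw [if_neg hz.1, if_neg hz.2, (M.msymm u z).mp hMu]
          simp [hu, hu']

def promote (M : Matching V E) (a t : V) (hat : a ≠ t)
    (hEs : ∀ u v, E u v → E v u) (hE : E a t) : Matching V E where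
  m := promoFun M a t
  msymm u v := ⟨promoFun_symm M a t hat u v, promoFun_symm M a t hat v u⟩
  valid := by
    intro u v h
    unfold promoFun at h
    by_cases hu : u = a
    · subst hu
      rw [if_pos rfl] at h
      obtain rfl : t = v := by injection h
      exact hE
    · by_cases hu' : u = t
      · subst hu'
        rw [if_neg (Ne.symm hat), if_pos rfl] at h
        obtain rfl : a = v := by injection h
        exact hEs _ _ hE
      · rw [if_neg hu, if_neg hu'] at h
        rcases hMu : M.m u with _ | z
        · rw [hMu] at h; simp at h
        · rw [hMu] at h
          simp only [Option.bind_some] at h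
          by_cases hz : z = a ∨ z = t
          · rw [if_pos hz] at h; simp at h
          · rw [if_neg hz] at h
            obtain rfl : z = v := by injection h
            exact M.valid u z hMu

variable {M : Matching V E} {a t : V} {hat : a ≠ t} {hEs : ∀ u v, E u v → E v u} {hE : E a t}

lemma promote_fst : (promote M a t hat hEs hE).m a = some t := by
  simp [promote, promoFun]

lemma promote_snd : (promote M a t hat hEs hE).m t = some a := by
  simp [promote, promoFun, Ne.symm hat]

lemma promote_other {v : V} (hva : v ≠ a) (hvt : v ≠ t) :
    (promote M a t hat hEs hE).m v
      = (M.m v).bind fun u => if u = a ∨ u = t then none else some u := by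
  simp [promote, promoFun, hva, hvt]

lemma promote_unchanged {v : V} (hva : v ≠ a) (hvt : v ≠ t)
    (h1 : M.m v ≠ some a) (h2 : M.m v ≠ some t) :
    (promote M a t hat hEs hE).m v = M.m v := by
  rw [promote_other hva hvt]
  rcases hMv : M.m v with _ | z
  · rfl
  · have : ¬ (z = a ∨ z = t) := by rintro (rfl | rfl); exacts [h1 hMv, h2 hMv]
    simp [this]

end Promote

section Promotions

lemma ite_nn (P : Prop) [Decidable P] (r : ℚ) (hr : 0 ≤ r) : 0 ≤ if P then r else 0 := by
  split_ifs
  exacts [hr, le_rfl]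

lemma weightPref_le_sum (I : PMInstance V) (M M' : Matching V I.E) (g : V → ℚ)
    (hg : ∀ v, 0 ≤ g v) (h : ∀ v, prefersVx I M M' v → I.w v ≤ g v) :
    weightPref I M M' ≤ ∑ v : V, g v := by
  refine Finset.sum_le_sum fun v _ => ?_
  split_ifs with hv
  · exact h v hv
  · exact hg v

lemma sum_le_weightPref (I : PMInstance V) (M M' : Matching V I.E) (g : V → ℚ)
    (h : ∀ v, g v ≤ if prefersVx I M M' v then I.w v else 0) :
    (∑ v : V, g v) ≤ weightPref I M M' :=
  Finset.sum_le_sum fun v _ => h v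

lemma single_promo (I : PMInstance V) {c : ℚ} (hc : 3 < c)
    (hA : ∀ a ∈ I.A, I.w a = c) (hB : ∀ b : V, b ∉ I.A → I.w b = 1)
    (M : Matching V I.E) (a t : V) (ha : a ∈ I.A) (hE : I.E a t)
    (hfree : M.m t = none) (hp : ∀ u, M.m a = some u → I.pref a t u) :
    ¬ popular I M := by
  intro hpop
  have ht : t ∉ I.A := (I.bipartite a t hE).mp ha
  have hat : a ≠ t := fun h => ht (h ▸ ha)
  set M' := promote M a t hat I.Esymm hE with hM'def
  have e1 : M'.m a = some t := promote_fst
  have hwin : prefersVx I M' M a := by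
    rcases hMa : M.m a with _ | z
    · exact Or.inl ⟨hMa, by rw [e1]; simp⟩
    · exact Or.inr ⟨t, z, e1, hMa, hp z hMa⟩
  have hlose : ∀ v, prefersVx I M M' v → M.m a = some v := by
    intro v hv
    by_cases hva : v = a
    · exfalso
      rw [hva] at hv
      rcases hv with ⟨h1, _⟩ | ⟨u, u', hu, hu', hpref⟩
      · rw [e1] at h1; cases h1
      · rw [e1] at hu'
        obtain rfl : t = u' := by injection hu'
        exact I.pref_asymm _ _ _ hpref (hp u hu)
    · by_cases hvt : v = t
      · exfalso
        rcases hv with ⟨_, h2⟩ | ⟨u, u', hu, _, _⟩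
        · rw [hvt] at h2; exact h2 hfree
        · rw [hvt, hfree] at hu; cases hu
      · by_cases hMv : M.m v = some a
        · exact (M.msymm v a).mp hMv
        · exfalso
          have hMvt : M.m v ≠ some t := fun h => by
            rw [(M.msymm v t).mp h] at hfree; cases hfree
          have heq : M'.m v = M.m v := promote_unchanged hva hvt hMv hMvt
          rcases hv with ⟨h1, h2⟩ | ⟨u, u', hu, hu', hpref⟩
          · rw [heq] at h1; exact h2 h1
          · rw [heq, hu] at hu'
            obtain rfl : u = u' := by injection hu'
            exact I.pref_irrefl v u hpref
  have hub : weightPref I M M' ≤ ∑ v : V, (if M.m a = some v then (1:ℚ) else 0) := by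
    refine weightPref_le_sum I M M' _ (fun v => ite_nn _ _ (by norm_num)) (fun v hv => ?_)
    rw [if_pos (hlose v hv), hB v ((I.bipartite a v (M.valid a v (hlose v hv))).mp ha)]
  have hub2 : (∑ v : V, (if M.m a = some v then (1:ℚ) else 0)) ≤ 1 := by
    rcases hMa : M.m a with _ | z
    · simp
    · simp only [Option.some.injEq]
      rw [Finset.sum_ite_eq Finset.univ z (fun _ => (1:ℚ))]
      simp
  have hlb : c ≤ weightPref I M' M := by
    have := sum_le_weightPref I M' M (fun v => if v = a then c else 0) ?_
    · rwa [Finset.sum_ite_eq' Finset.univ a (fun _ => c), if_pos (Finset.mem_univ a)] at this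
    · intro v
      by_cases hva : v = a
      · rw [if_pos hva, if_pos (show prefersVx I M' M v by rw [hva]; exact hwin),
          show I.w v = c by rw [hva]; exact hA a ha]
      · rw [if_neg hva]
        exact ite_nn _ _ (I.w_nonneg v)
  have := hpop M'
  linarith

lemma double_promo (I : PMInstance V) {c : ℚ} (hc : 3 < c)
    (hA : ∀ a ∈ I.A, I.w a = c) (hB : ∀ b : V, b ∉ I.A → I.w b = 1)
    (M : Matching V I.E) (a₁ t₁ a₂ t₂ : V)
    (ha₁ : a₁ ∈ I.A) (ha₂ : a₂ ∈ I.A)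
    (hnea : a₁ ≠ a₂) (hnet : t₁ ≠ t₂)
    (hE₁ : I.E a₁ t₁) (hE₂ : I.E a₂ t₂)
    (hMt₁ : M.m t₁ = some a₂)
    (hp₁ : ∀ u, M.m a₁ = some u → I.pref a₁ t₁ u)
    (hp₂ : I.pref a₂ t₂ t₁) :
    ¬ popular I M := by
  intro hpop
  have hc0 : (0:ℚ) ≤ c := by linarith
  have ht₁ : t₁ ∉ I.A := (I.bipartite a₁ t₁ hE₁).mp ha₁
  have ht₂ : t₂ ∉ I.A := (I.bipartite a₂ t₂ hE₂).mp ha₂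
  have hat₁ : a₁ ≠ t₁ := fun h => ht₁ (h ▸ ha₁)
  have hat₂ : a₂ ≠ t₂ := fun h => ht₂ (h ▸ ha₂)
  have ha₁t₂ : a₁ ≠ t₂ := fun h => ht₂ (h ▸ ha₁)
  have ha₂t₁ : a₂ ≠ t₁ := fun h => ht₁ (h ▸ ha₂)
  have hMa₂ : M.m a₂ = some t₁ := (M.msymm t₁ a₂).mp hMt₁
  set M₁ := promote M a₁ t₁ hat₁ I.Esymm hE₁ with hM₁
  set M' := promote M₁ a₂ t₂ hat₂ I.Esymm hE₂ with hM'
  have e2 : M'.m a₂ = some t₂ := promote_fst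
  have eM₁ : M₁.m a₁ = some t₁ := promote_fst
  have e1 : M'.m a₁ = some t₁ := by
    rw [hM', promote_other hnea ha₁t₂, eM₁]
    simp [Ne.symm ha₂t₁, hnet]
  have hwin₁ : prefersVx I M' M a₁ := by
    rcases hMa : M.m a₁ with _ | z
    · exact Or.inl ⟨hMa, by rw [e1]; simp⟩
    · exact Or.inr ⟨t₁, z, e1, hMa, hp₁ z hMa⟩
  have hwin₂ : prefersVx I M' M a₂ := Or.inr ⟨t₂, t₁, e2, hMa₂, hp₂⟩
  have hlose : ∀ v, prefersVx I M M' v →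
      v = t₁ ∨ v = t₂ ∨ M.m a₁ = some v ∨ M.m t₂ = some v := by
    intro v hv
    by_cases h1 : v = t₁
    · exact Or.inl h1
    by_cases h2 : v = t₂
    · exact Or.inr (Or.inl h2)
    by_cases h3 : v = a₁
    · exfalso
      rw [h3] at hv
      rcases hv with ⟨hn, _⟩ | ⟨u, u', hu, hu', hpref⟩
      · rw [e1] at hn; cases hn
      · rw [e1] at hu'
        obtain rfl : t₁ = u' := by injection hu'
        exact I.pref_asymm _ _ _ hpref (hp₁ u hu)
    by_cases h4 : v = a₂
    · exfalso
      rw [h4] at hv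
      rcases hv with ⟨hn, _⟩ | ⟨u, u', hu, hu', hpref⟩
      · rw [e2] at hn; cases hn
      · rw [e2] at hu'
        obtain rfl : t₂ = u' := by injection hu'
        rw [hMa₂] at hu
        obtain rfl : t₁ = u := by injection hu
        exact I.pref_asymm _ _ _ hp₂ hpref
    by_cases h5 : M.m a₁ = some v
    · exact Or.inr (Or.inr (Or.inl h5))
    by_cases h6 : M.m t₂ = some v
    · exact Or.inr (Or.inr (Or.inr h6))
    exfalso
    have hva₁ : M.m v ≠ some a₁ := fun h => h5 ((M.msymm v a₁).mp h)
    have hvt₂ : M.m v ≠ some t₂ := fun h => h6 ((M.msymm v t₂).mp h)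
    have hvt₁ : M.m v ≠ some t₁ := fun h => h4 (by
      have h' := (M.msymm v t₁).mp h
      rw [hMt₁] at h'
      injection h' with h''
      exact h''.symm)
    have hva₂ : M.m v ≠ some a₂ := fun h => h1 (by
      have h' := (M.msymm v a₂).mp h
      rw [hMa₂] at h'
      injection h' with h''
      exact h''.symm)
    have s1 : M₁.m v = M.m v := promote_unchanged h3 h1 hva₁ hvt₁
    have heq : M'.m v = M.m v := by
      have s2 : M'.m v = M₁.m v :=
        promote_unchanged h4 h2 (by rw [s1]; exact hva₂) (by rw [s1]; exact hvt₂)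
      rw [s2, s1]
    rcases hv with ⟨hn, hnn⟩ | ⟨u, u', hu, hu', hpref⟩
    · rw [heq] at hn; exact hnn hn
    · rw [heq, hu] at hu'
      obtain rfl : u = u' := by injection hu'
      exact I.pref_irrefl v u hpref
  have hub : weightPref I M M' ≤
      ∑ v : V, ((if v = t₁ then (1:ℚ) else 0) + (if v = t₂ then (1:ℚ) else 0) +
        (if M.m a₁ = some v then (1:ℚ) else 0) + (if M.m t₂ = some v then c else 0)) := by
    refine weightPref_le_sum I M M' _ (fun v => ?_) (fun v hv => ?_)
    · have k1 := ite_nn (v = t₁) (1:ℚ) (by norm_num)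
      have k2 := ite_nn (v = t₂) (1:ℚ) (by norm_num)
      have k3 := ite_nn (M.m a₁ = some v) (1:ℚ) (by norm_num)
      have k4 := ite_nn (M.m t₂ = some v) c hc0
      linarith
    · have k1 := ite_nn (v = t₁) (1:ℚ) (by norm_num)
      have k2 := ite_nn (v = t₂) (1:ℚ) (by norm_num)
      have k3 := ite_nn (M.m a₁ = some v) (1:ℚ) (by norm_num)
      have k4 := ite_nn (M.m t₂ = some v) c hc0
      obtain h | h | h | h := hlose v hv
      · rw [hB v (by rw [h]; exact ht₁), if_pos h]; linarith
      · rw [hB v (by rw [h]; exact ht₂), if_pos h]; linarith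
      · rw [hB v ((I.bipartite a₁ v (M.valid a₁ v h)).mp ha₁), if_pos h]; linarith
      · have hvA : v ∈ I.A := by
          by_contra hvA
          exact ht₂ ((I.bipartite t₂ v (M.valid t₂ v h)).mpr hvA)
        rw [hA v hvA, if_pos h]; linarith
  have hS1 : (∑ v : V, if v = t₁ then (1:ℚ) else 0) = 1 := by
    rw [Finset.sum_ite_eq' Finset.univ t₁ (fun _ => (1:ℚ))]; simp
  have hS2 : (∑ v : V, if v = t₂ then (1:ℚ) else 0) = 1 := by
    rw [Finset.sum_ite_eq' Finset.univ t₂ (fun _ => (1:ℚ))]; simp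
  have hS3 : (∑ v : V, if M.m a₁ = some v then (1:ℚ) else 0) ≤ 1 := by
    rcases hz : M.m a₁ with _ | z
    · simp
    · simp only [Option.some.injEq]
      rw [Finset.sum_ite_eq Finset.univ z (fun _ => (1:ℚ))]
      simp
  have hS4 : (∑ v : V, if M.m t₂ = some v then c else 0) ≤ c := by
    rcases hz : M.m t₂ with _ | z
    · simpa using hc0
    · simp only [Option.some.injEq]
      rw [Finset.sum_ite_eq Finset.univ z (fun _ => c)]
      simp
  have hsplit : (∑ v : V, ((if v = t₁ then (1:ℚ) else 0) + (if v = t₂ then (1:ℚ) else 0) +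
        (if M.m a₁ = some v then (1:ℚ) else 0) + (if M.m t₂ = some v then c else 0)))
      = (∑ v : V, if v = t₁ then (1:ℚ) else 0) + (∑ v : V, if v = t₂ then (1:ℚ) else 0) +
        (∑ v : V, if M.m a₁ = some v then (1:ℚ) else 0) +
        (∑ v : V, if M.m t₂ = some v then c else 0) := by
    rw [Finset.sum_add_distrib, Finset.sum_add_distrib, Finset.sum_add_distrib]
  have hlb : c + c ≤ weightPref I M' M := by
    have key := sum_le_weightPref I M' M
      (fun v => (if v = a₁ then c else 0) + (if v = a₂ then c else 0)) ?_
    · rw [Finset.sum_add_distrib, Finset.sum_ite_eq' Finset.univ a₁ (fun _ => c),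
        Finset.sum_ite_eq' Finset.univ a₂ (fun _ => c),
        if_pos (Finset.mem_univ a₁), if_pos (Finset.mem_univ a₂)] at key
      exact key
    · intro v
      by_cases hv1 : v = a₁
      · rw [if_pos hv1, if_neg (show ¬ v = a₂ from fun hh => hnea (hv1.symm.trans hh)),
          if_pos (show prefersVx I M' M v by rw [hv1]; exact hwin₁),
          show I.w v = c by rw [hv1]; exact hA a₁ ha₁]
        norm_num
      · rw [if_neg hv1]
        by_cases hv2 : v = a₂
        · rw [if_pos hv2, if_pos (show prefersVx I M' M v by rw [hv2]; exact hwin₂),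
            show I.w v = c by rw [hv2]; exact hA a₂ ha₂]
          norm_num
        · rw [if_neg hv2]
          have := ite_nn (prefersVx I M' M v) (I.w v) (I.w_nonneg v)
          linarith
  have := hpop M'
  linarith

end Promotions

section FS

lemma finset_max (I : PMInstance V) (a : V) :
    ∀ s : Finset V, s.Nonempty → ∃ b ∈ s, ∀ z ∈ s, ¬ I.pref a z b := by
  intro s
  induction s using Finset.induction_on with
  | empty => intro h; exact absurd h (by simp)
  | @insert x s hx ih =>
    intro _
    rcases s.eq_empty_or_nonempty with rfl | hs
    · refine ⟨x, Finset.mem_insert_self x _, ?_⟩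
      intro z hz hpz
      rcases Finset.mem_insert.mp hz with rfl | hz'
      · exact I.pref_irrefl a _ hpz
      · simp at hz'
    · obtain ⟨b, hb, hmax⟩ := ih hs
      by_cases hxb : I.pref a x b
      · refine ⟨x, Finset.mem_insert_self x _, ?_⟩
        intro z hz hpz
        rcases Finset.mem_insert.mp hz with rfl | hz'
        · exact I.pref_irrefl a _ hpz
        · exact hmax z hz' (I.pref_trans a z _ b hpz hxb)
      · refine ⟨b, Finset.mem_insert_of_mem hb, ?_⟩
        intro z hz hpz
        rcases Finset.mem_insert.mp hz with rfl | hz'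
        · exact hxb hpz
        · exact hmax z hz' hpz

lemma exists_firstChoice (I : PMInstance V) (a : V) (hne : ∃ z, I.E a z) :
    ∃ b, firstChoice I a b := by
  obtain ⟨z0, hz0⟩ := hne
  have hs : (Finset.univ.filter (fun z => I.E a z)).Nonempty :=
    ⟨z0, Finset.mem_filter.mpr ⟨Finset.mem_univ z0, hz0⟩⟩
  obtain ⟨b, hb, hmax⟩ := finset_max I a _ hs
  have hEb : I.E a b := (Finset.mem_filter.mp hb).2
  refine ⟨b, hEb, fun z hz hzb => ?_⟩
  rcases I.pref_total a b z hEb hz (Ne.symm hzb) with h | h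
  · exact h
  · exact absurd h (hmax z (Finset.mem_filter.mpr ⟨Finset.mem_univ z, hz⟩))

lemma firstChoice_unique (I : PMInstance V) {a b b' : V}
    (h : firstChoice I a b) (h' : firstChoice I a b') : b = b' := by
  by_contra hne
  exact I.pref_asymm _ _ _ (h.2 b' h'.1 (fun hh => hne hh.symm)) (h'.2 b h.1 hne)

lemma matched_fs (I : PMInstance V) {c : ℚ} (hc : 3 < c)
    (hA : ∀ a ∈ I.A, I.w a = c) (hB : ∀ b : V, b ∉ I.A → I.w b = 1)
    (M : Matching V I.E) (hM : popular I M) (a bf bs : V) (ha : a ∈ I.A)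
    (hf : firstChoice I a bf) (hs : sPost I a bs) :
    M.m a = some bf ∨ M.m a = some bs := by
  by_contra hcon
  push_neg at hcon
  obtain ⟨h1, h2⟩ := hcon
  have hbfA : bf ∉ I.A := (I.bipartite a bf hf.1).mp ha
  have hbsA : bs ∉ I.A := (I.bipartite a bs hs.1).mp ha
  have hcase : (∀ u, M.m a = some u → I.pref a bs u) ∨
      (∃ z, M.m a = some z ∧ I.pref a z bs) := by
    rcases hMa : M.m a with _ | z
    · left; intro u hu; cases hu
    · by_cases hzs : I.pref a bs z
      · left
        intro u hu
        obtain rfl : z = u := by injection hu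
        exact hzs
      · right
        refine ⟨z, rfl, ?_⟩
        have hEz : I.E a z := M.valid a z hMa
        have hnz : z ≠ bs := fun hh => h2 (by rw [← hh]; exact hMa)
        rcases I.pref_total a z bs hEz hs.1 hnz with h | h
        · exact h
        · exact absurd h hzs
  rcases hcase with hp | ⟨z, hMa, hzs⟩
  · rcases hbs : M.m bs with _ | a2
    · exact single_promo I hc hA hB M a bs ha hs.1 hbs hp hM
    · have hEa2 : I.E bs a2 := M.valid bs a2 hbs
      have ha2A : a2 ∈ I.A := by
        by_contra hno
        exact hbsA ((I.bipartite bs a2 hEa2).mpr hno)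
      obtain ⟨b2, hb2⟩ := exists_firstChoice I a2 ⟨bs, I.Esymm bs a2 hEa2⟩
      have hb2ne : b2 ≠ bs := fun hh => hs.2.1 ⟨a2, hh ▸ hb2⟩
      have hne_a : a ≠ a2 := fun hh => h2 (by rw [hh]; exact (M.msymm bs a2).mp hbs)
      exact absurd hM (double_promo I hc hA hB M a bs a2 b2 ha ha2A hne_a
        (Ne.symm hb2ne) hs.1 hb2.1 hbs hp
        (hb2.2 bs (I.Esymm bs a2 hEa2) (fun hh => hb2ne hh.symm)))
  · have hEz : I.E a z := M.valid a z hMa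
    have hzA : z ∉ I.A := (I.bipartite a z hEz).mp ha
    have hznbf : z ≠ bf := fun hh => h1 (hh ▸ hMa)
    have hznbs : z ≠ bs := fun hh => h2 (hh ▸ hMa)
    have hzfc : ∃ x, firstChoice I x z := by
      by_contra hno
      exact I.pref_asymm _ _ _ hzs (hs.2.2 z hEz hznbs hno)
    obtain ⟨x, hx⟩ := hzfc
    have hxA : x ∈ I.A := (I.bipartite x z hx.1).mpr hzA
    have hxa : x ≠ a := fun hh => hznbf (firstChoice_unique I (hh ▸ hx) hf)
    have hMz : M.m z = some a := (M.msymm a z).mp hMa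
    have hp₁ : ∀ u, M.m x = some u → I.pref x z u := by
      intro u hu
      have hun : u ≠ z := by
        intro hh
        rw [hh] at hu
        have h' := (M.msymm x z).mp hu
        rw [hMz] at h'
        injection h' with h''
        exact hxa h''.symm
      exact hx.2 u (M.valid x u hu) hun
    exact absurd hM (double_promo I hc hA hB M x z a bf hxA ha hxa hznbf hx.1 hf.1
      hMz hp₁ (hf.2 z hEz hznbf))

end FS

section Cycle

lemma walk_fst_edge {G : SimpleGraph V} {u v : V} (q : G.Walk u v) (h : q.length ≠ 0) :
    ∃ x, s(u, x) ∈ q.edges := by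
  cases q with
  | nil => simp at h
  | @cons _ w _ hadj q' => exact ⟨w, by simp⟩

lemma walk_last_edge {G : SimpleGraph V} {u v : V} (q : G.Walk u v) (h : q.length ≠ 0) :
    ∃ y, s(v, y) ∈ q.edges := by
  obtain ⟨y, hy⟩ := walk_fst_edge q.reverse (by rwa [SimpleGraph.Walk.length_reverse])
  exact ⟨y, by rwa [SimpleGraph.Walk.edges_reverse, List.mem_reverse] at hy⟩

lemma cycle_two_edges_aux {G : SimpleGraph V} {v : V} (q : G.Walk v v) (hq : q.IsCycle) :
    ∃ x y, x ≠ y ∧ s(v, x) ∈ q.edges ∧ s(v, y) ∈ q.edges := by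
  cases q with
  | nil => exact absurd hq SimpleGraph.Walk.IsCycle.not_of_nil
  | @cons _ w _ hadj q' =>
    have h3 := hq.three_le_length
    rw [SimpleGraph.Walk.length_cons] at h3
    obtain ⟨y, hy⟩ := walk_last_edge q' (by omega)
    have hnd := hq.edges_nodup
    rw [SimpleGraph.Walk.edges_cons] at hnd
    have hnotin : s(v, w) ∉ q'.edges := (List.nodup_cons.mp hnd).1
    refine ⟨w, y, ?_, by simp, List.mem_cons_of_mem _ hy⟩
    intro hxy
    rw [← hxy] at hy
    exact hnotin hy

lemma cycle_two_edges {G : SimpleGraph V} {u₀ : V} (p : G.Walk u₀ u₀) (hp : p.IsCycle)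
    {v : V} (hv : v ∈ p.support) :
    ∃ x y, x ≠ y ∧ s(v, x) ∈ p.edges ∧ s(v, y) ∈ p.edges := by
  obtain ⟨x, y, hne, hx, hy⟩ := cycle_two_edges_aux (p.rotate v hv) (hp.rotate hv)
  exact ⟨x, y, hne, (p.rotate_edges v hv).mem_iff.mp hx, (p.rotate_edges v hv).mem_iff.mp hy⟩

lemma end_mem_tail {G : SimpleGraph V} {u v : V} (q : G.Walk u v) (h : q.length ≠ 0) :
    v ∈ q.support.tail := by
  cases q with
  | nil => simp at h
  | cons hadj q' => simpa using q'.end_mem_support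

lemma fs_adj_one (I : PMInstance V) {u w : V} (h : (fsGraph I).Adj u w) :
    (u ∈ I.A ∧ w ∉ I.A) ∨ (u ∉ I.A ∧ w ∈ I.A) := by
  rcases (show u ≠ w ∧ fsRel I u w from h).2 with ⟨huA, h'⟩ | ⟨hwA, h'⟩
  · have hE : I.E u w := by rcases h' with h' | h'; exacts [h'.1, h'.1]
    exact Or.inl ⟨huA, (I.bipartite u w hE).mp huA⟩
  · have hE : I.E w u := by rcases h' with h' | h'; exacts [h'.1, h'.1]
    exact Or.inr ⟨(I.bipartite w u hE).mp hwA, hwA⟩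

lemma walk_counts (I : PMInstance V) {u v : V} (q : (fsGraph I).Walk u v) :
    2 * (q.support.filter (fun x => decide (x ∈ I.A))).length
      = q.length + ((if u ∈ I.A then 1 else 0) + (if v ∈ I.A then 1 else 0)) ∧
    2 * (q.support.filter (fun x => decide (x ∉ I.A))).length
      = q.length + ((if u ∉ I.A then 1 else 0) + (if v ∉ I.A then 1 else 0)) := by
  induction q with
  | @nil a =>
    by_cases h : a ∈ I.A <;> simp [h]
  | @cons a b d hadj q' ih =>
    obtain ⟨ih1, ih2⟩ := ih
    rcases fs_adj_one I hadj with ⟨h1, h2⟩ | ⟨h1, h2⟩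
    · rw [if_neg h2] at ih1
      rw [if_pos h2] at ih2
      constructor
      · rw [SimpleGraph.Walk.support_cons, SimpleGraph.Walk.length_cons,
          List.filter_cons, if_pos (by simp [h1]), List.length_cons, if_pos h1]
        omega
      · rw [SimpleGraph.Walk.support_cons, SimpleGraph.Walk.length_cons,
          List.filter_cons, if_neg (by simp [h1]), if_neg (show ¬ a ∉ I.A from fun hh => hh h1)]
        omega
    · rw [if_pos h2] at ih1
      rw [if_neg (show ¬ b ∉ I.A from fun hh => hh h2)] at ih2
      constructor
      · rw [SimpleGraph.Walk.support_cons, SimpleGraph.Walk.length_cons,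
          List.filter_cons, if_neg (by simp [h1]), if_neg h1]
        omega
      · rw [SimpleGraph.Walk.support_cons, SimpleGraph.Walk.length_cons,
          List.filter_cons, if_pos (by simp [h1]), List.length_cons, if_pos h1]
        omega

end Cycle

lemma sPost_unique (I : PMInstance V) {a b b' : V}
    (h : sPost I a b) (h' : sPost I a b') : b = b' := by
  by_contra hne
  exact I.pref_asymm _ _ _ (h.2.2 b' h'.1 (fun hh => hne hh.symm) h'.2.1)
    (h'.2.2 b h.1 hne h.2.1)

/-- With `w(a) = c > 3` on `A` and `w(b) = 1` on `B`: on every cycle of the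
`f/s`-edge graph, every popular matching matches each cycle vertex along a
cycle edge. -/
theorem cycle_matched_along_cycle (I : PMInstance V) (c : ℚ) (hc : 3 < c)
    (hA : ∀ a ∈ I.A, I.w a = c) (hB : ∀ b : V, b ∉ I.A → I.w b = 1)
    (u₀ : V) (p : (fsGraph I).Walk u₀ u₀) (hp : p.IsCycle)
    (M : Matching V I.E) (hM : popular I M) :
    ∀ v ∈ p.support, ∃ z ∈ p.support, M.m v = some z ∧ s(v, z) ∈ p.edges := by
  have stepA : ∀ x ∈ p.support, x ∈ I.A → ∃ z, M.m x = some z ∧ s(x, z) ∈ p.edges := by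
    intro x hx hxA
    obtain ⟨y₁, y₂, hne, he₁, he₂⟩ := cycle_two_edges p hp hx
    have hfs : ∀ y, s(x, y) ∈ p.edges → firstChoice I x y ∨ sPost I x y := by
      intro y he
      have hadj : (fsGraph I).Adj x y := p.adj_of_mem_edges he
      rcases (show x ≠ y ∧ fsRel I x y from hadj).2 with ⟨_, h⟩ | ⟨hyA, h⟩
      · exact h
      · exfalso
        have hE : I.E y x := by rcases h with h | h; exacts [h.1, h.1]
        exact (I.bipartite y x hE).mp hyA hxA
    rcases hfs y₁ he₁ with h1 | h1 <;> rcases hfs y₂ he₂ with h2 | h2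
    · exact absurd (firstChoice_unique I h1 h2) hne
    · rcases matched_fs I hc hA hB M hM x y₁ y₂ hxA h1 h2 with h | h
      exacts [⟨y₁, h, he₁⟩, ⟨y₂, h, he₂⟩]
    · rcases matched_fs I hc hA hB M hM x y₂ y₁ hxA h2 h1 with h | h
      exacts [⟨y₂, h, he₂⟩, ⟨y₁, h, he₁⟩]
    · exact absurd (sPost_unique I h1 h2) hne
  intro v hv
  by_cases hvA : v ∈ I.A
  · obtain ⟨z, hz, he⟩ := stepA v hv hvA
    exact ⟨z, p.snd_mem_support_of_mem_edges he, hz, he⟩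
  · have hnn : p.length ≠ 0 := by have := hp.three_le_length; omega
    have hu₀t : u₀ ∈ p.support.tail := end_mem_tail p hnn
    have hmemtail : ∀ x, x ∈ p.support ↔ x ∈ p.support.tail := by
      intro x
      constructor
      · intro hx
        rw [SimpleGraph.Walk.support_eq_cons p] at hx
        rcases List.mem_cons.mp hx with h | h
        · rw [h]; exact hu₀t
        · exact h
      · intro hx
        rw [SimpleGraph.Walk.support_eq_cons p]
        exact List.mem_cons_of_mem _ hx
    have hnd : p.support.tail.Nodup := hp.support_nodup
    have hlen : (p.support.tail.filter (fun x => decide (x ∈ I.A))).length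
        = (p.support.tail.filter (fun x => decide (x ∉ I.A))).length := by
      obtain ⟨h1, h2⟩ := walk_counts I p
      rw [SimpleGraph.Walk.support_eq_cons p, List.filter_cons] at h1 h2
      by_cases h0 : u₀ ∈ I.A
      · rw [if_pos (by simp [h0]), List.length_cons, if_pos h0] at h1
        rw [if_neg (by simp [h0]), if_neg (show ¬ u₀ ∉ I.A from fun hh => hh h0)] at h2
        omega
      · rw [if_neg (by simp [h0]), if_neg h0] at h1
        rw [if_pos (by simp [h0]), List.length_cons, if_pos h0] at h2
        omega
    have hndLA : (p.support.tail.filter (fun x => decide (x ∈ I.A))).Nodup := hnd.filter _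
    have hndLB : (p.support.tail.filter (fun x => decide (x ∉ I.A))).Nodup := hnd.filter _
    have hmemFA : ∀ x, x ∈ (p.support.tail.filter (fun x => decide (x ∈ I.A))).toFinset
        ↔ x ∈ p.support.tail ∧ x ∈ I.A := by
      intro x; rw [List.mem_toFinset, List.mem_filter]; simp
    have hmemFB : ∀ x, x ∈ (p.support.tail.filter (fun x => decide (x ∉ I.A))).toFinset
        ↔ x ∈ p.support.tail ∧ x ∉ I.A := by
      intro x; rw [List.mem_toFinset, List.mem_filter]; simp
    have key : ∀ x ∈ (p.support.tail.filter (fun x => decide (x ∈ I.A))).toFinset,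
        ∃ z, M.m x = some z ∧ s(x, z) ∈ p.edges ∧
          z ∈ (p.support.tail.filter (fun x => decide (x ∉ I.A))).toFinset := by
      intro x hx
      obtain ⟨hxt, hxA⟩ := (hmemFA x).mp hx
      obtain ⟨z, hz, he⟩ := stepA x ((hmemtail x).mpr hxt) hxA
      refine ⟨z, hz, he, (hmemFB z).mpr
        ⟨(hmemtail z).mp (p.snd_mem_support_of_mem_edges he), ?_⟩⟩
      exact (I.bipartite x z (M.valid x z hz)).mp hxA
    have hφval : ∀ x z, M.m x = some z → (M.m x).getD x = z := by
      intro x z h; rw [h]; rfl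
    have hinj : Set.InjOn (fun x => (M.m x).getD x)
        ((p.support.tail.filter (fun x => decide (x ∈ I.A))).toFinset : Finset V) := by
      intro x hx x' hx' heq
      obtain ⟨z, hz, _, _⟩ := key x (Finset.mem_coe.mp hx)
      obtain ⟨z', hz', _, _⟩ := key x' (Finset.mem_coe.mp hx')
      simp only [hφval x z hz, hφval x' z' hz'] at heq
      rw [← heq] at hz'
      have e1 := (M.msymm x z).mp hz
      have e2 := (M.msymm x' z).mp hz'
      rw [e1] at e2
      injection e2
    have himg : (p.support.tail.filter (fun x => decide (x ∈ I.A))).toFinset.image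
          (fun x => (M.m x).getD x)
        = (p.support.tail.filter (fun x => decide (x ∉ I.A))).toFinset := by
      apply Finset.eq_of_subset_of_card_le
      · intro z hz
        obtain ⟨x, hx, hxz⟩ := Finset.mem_image.mp hz
        obtain ⟨z', hz', _, hzFB⟩ := key x hx
        rw [hφval x z' hz'] at hxz
        rw [← hxz]
        exact hzFB
      · rw [Finset.card_image_of_injOn hinj, List.toFinset_card_of_nodup hndLA,
          List.toFinset_card_of_nodup hndLB]
        exact hlen.ge
    have hvFB : v ∈ (p.support.tail.filter (fun x => decide (x ∉ I.A))).toFinset :=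
      (hmemFB v).mpr ⟨(hmemtail v).mp hv, hvA⟩
    rw [← himg] at hvFB
    obtain ⟨x, hxFA, hxv⟩ := Finset.mem_image.mp hvFB
    obtain ⟨z, hz, he, _⟩ := key x hxFA
    rw [hφval x z hz] at hxv
    rw [← hxv]
    refine ⟨x, (hmemtail x).mpr ((hmemFA x).mp hxFA).1, (M.msymm x z).mp hz, ?_⟩
    rwa [Sym2.eq_swap]
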